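/- arXiv:math/0602492 — 8 statements merged into one kernel-verified Lean document; each statement's English description precedes it below -/
import Mathlib

section
/- Let A be an associative unital ℂ-algebra and q, r ∈ ℂ nonzero. Let x, θ, ∂x, ∂θ ∈ A satisfy the Type II quantum superplane relations: x·θ = q·(θ·x), θ·θ = 0, ∂x·x = 1 + r·(x·∂x) + (r−1)·(θ·∂θ), ∂x·θ = (r/q)·(θ·∂x), ∂θ·x = q·(x·∂θ), ∂θ·θ = 1 − θ·∂θ, and ∂θ·∂θ = 0. Define H = x·∂x + θ·∂θ and ∇ = x·∂θ. Then H·x = x + r·(x·H), H·θ = θ + r·(θ·H), ∇·x = q·(x·∇), and ∇·θ = x − q·(θ·∇). -/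
theorem vector_field_coordinate_comm {A : Type*} [Ring A] [Algebra ℂ A] (q r : ℂ)
    (hq : q ≠ 0) (hr : r ≠ 0) (x θ px pθ : A)
    (hxθ : x * θ = q • (θ * x)) (hθθ : θ * θ = 0)
    (hpx_x : px * x = 1 + r • (x * px) + (r - 1) • (θ * pθ))
    (hpx_θ : px * θ = (r / q) • (θ * px))
    (hpθ_x : pθ * x = q • (x * pθ))
    (hpθ_θ : pθ * θ = 1 - θ * pθ)
    (hpθ_pθ : pθ * pθ = 0) :
    (x * px + θ * pθ) * x = x + r • (x * (x * px + θ * pθ)) ∧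
    (x * px + θ * pθ) * θ = θ + r • (θ * (x * px + θ * pθ)) ∧
    (x * pθ) * x = q • (x * (x * pθ)) ∧
    (x * pθ) * θ = x - q • (θ * (x * pθ)) := by

  have hθx : θ * x = q⁻¹ • (x * θ) := by
    rw [hxθ, smul_smul, inv_mul_cancel₀ hq, one_smul]
  refine ⟨?_, ?_, ?_, ?_⟩
  · rw [add_mul, mul_assoc, mul_assoc, hpx_x, hpθ_x, mul_smul_comm, ← mul_assoc, hθx,
      smul_mul_assoc, smul_smul, mul_inv_cancel₀ hq, one_smul, mul_assoc]
    simp only [mul_add, mul_sub, mul_one, mul_smul_comm, smul_add, smul_sub, sub_smul, one_smul]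
    module
  · rw [add_mul, mul_assoc, mul_assoc, hpx_θ, hpθ_θ, mul_smul_comm, ← mul_assoc, hxθ,
      smul_mul_assoc, smul_smul, mul_assoc]
    have : r / q * q = r := div_mul_cancel₀ r hq
    rw [this]
    simp only [mul_sub, mul_one, mul_add, mul_smul_comm, smul_add, ← mul_assoc, hθθ,
      zero_mul, smul_zero, add_zero]
    module
  · rw [mul_assoc, hpθ_x, mul_smul_comm, ← mul_assoc]
  · rw [mul_assoc, hpθ_θ, mul_sub, mul_one, ← mul_assoc, hxθ, smul_mul_assoc, mul_assoc]
end

section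
/- Let A be an associative unital ℂ-algebra and Q ∈ ℂ nonzero. Let x ∈ A be invertible and let dx, dθ, θ, H ∈ A satisfy H·dx = dx·H, H·dθ = dθ·H, H·x = x + Q·(x·H), and H·θ = θ + Q·(θ·H). Define ωx = dx·x⁻¹ and ωθ = dθ·x⁻¹ − dx·x⁻¹·θ·x⁻¹. Then H·ωx = −Q⁻¹·ωx + Q⁻¹·(ωx·H) and H·ωθ = −Q⁻¹·ωθ + Q⁻¹·(ωθ·H). -/
theorem H_cartan_maurer_comm {A : Type*} [Ring A] [Algebra ℂ A] (Q : ℂ) (hQ : Q ≠ 0)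
    (x : Aˣ) (dx dθ θ H : A)
    (h1 : H * dx = dx * H) (h2 : H * dθ = dθ * H)
    (h3 : H * (x : A) = (x : A) + Q • ((x : A) * H))
    (h4 : H * θ = θ + Q • (θ * H)) :
    H * (dx * (↑x⁻¹ : A)) = (-Q⁻¹) • (dx * (↑x⁻¹ : A))
        + Q⁻¹ • ((dx * (↑x⁻¹ : A)) * H) ∧
    H * (dθ * (↑x⁻¹ : A) - dx * (↑x⁻¹ : A) * θ * (↑x⁻¹ : A)) =
      (-Q⁻¹) • (dθ * (↑x⁻¹ : A) - dx * (↑x⁻¹ : A) * θ * (↑x⁻¹ : A))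
        + Q⁻¹ • ((dθ * (↑x⁻¹ : A) - dx * (↑x⁻¹ : A) * θ * (↑x⁻¹ : A)) * H) := by
  have e : (↑x⁻¹ : A) * H = ↑x⁻¹ + Q • (H * ↑x⁻¹) := by
    have := congrArg (fun a => (↑x⁻¹ : A) * a * ↑x⁻¹) h3
    simpa [mul_add, add_mul, mul_assoc, mul_smul_comm, smul_mul_assoc,
      Units.inv_mul_cancel_left, Units.mul_inv_cancel_left] using this
  have hinv : H * (↑x⁻¹ : A) = (-Q⁻¹) • ↑x⁻¹ + Q⁻¹ • ((↑x⁻¹ : A) * H) := by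
    have h5 : Q • (H * (↑x⁻¹ : A)) = (↑x⁻¹ : A) * H - ↑x⁻¹ := by
      rw [e]; abel
    have := congrArg (Q⁻¹ • ·) h5
    simpa [smul_smul, inv_mul_cancel₀ hQ, smul_sub, neg_smul, sub_eq_add_neg,
      add_comm] using this
  have hθ : H * (θ * (↑x⁻¹ : A)) = (θ * (↑x⁻¹ : A)) * H := by
    rw [← mul_assoc, h4, add_mul, smul_mul_assoc, mul_assoc, hinv]
    simp [mul_add, smul_smul, mul_inv_cancel₀ hQ, smul_add, mul_assoc]
  constructor
  · rw [← mul_assoc, h1, mul_assoc, hinv]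
    simp [mul_add, smul_add, mul_smul_comm, smul_mul_assoc, mul_assoc]
  · rw [mul_sub]
    rw [show H * (dθ * (↑x⁻¹:A)) = dθ * (H * ↑x⁻¹) by rw [← mul_assoc, h2, mul_assoc]]
    rw [show H * (dx * (↑x⁻¹:A) * θ * (↑x⁻¹:A)) = dx * (H * ↑x⁻¹) * (θ * ↑x⁻¹) by
      rw [← mul_assoc, ← mul_assoc, ← mul_assoc, h1]; simp [mul_assoc]]
    rw [hinv]
    simp only [mul_add, add_mul, smul_mul_assoc, mul_smul_comm, mul_assoc, hθ,
      smul_sub, sub_mul, mul_sub, smul_add]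
    abel
end

section
/- Let A be an associative unital ℂ-algebra, q ∈ ℂ nonzero, and Q, Q₁₁, Q₁₂, Q₂₁, Q₂₂ ∈ ℂ satisfying Q₁₁ + q·Q₁₂ = q·Q, Q₁₁ + q·Q₂₂ = q, Q₁₂ + q·Q₂₁ = −1, and q·Q₂₁ + Q₂₂ = −Q. Let x ∈ A be invertible and let θ, dx, dθ ∈ A satisfy x·θ = q·(θ·x), θ·θ = 0, x·dx = Q·(dx·x), x·dθ = Q₁₁·(dθ·x) + Q₁₂·(dx·θ), θ·dx = Q₂₁·(dx·θ) + Q₂₂·(dθ·x), and θ·dθ = dθ·θ. Define ωx = dx·x⁻¹ and ωθ = dθ·x⁻¹ − dx·x⁻¹·θ·x⁻¹. Then x·ωx = Q·(ωx·x), x·ωθ = Q₁₁·(ωθ·x), θ·ωx = −Q·(ωx·θ) + Q₂₂·(ωθ·x), and θ·ωθ = Q₁₁·(ωθ·θ). -/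
theorem coordinate_cartan_maurer_comm {A : Type*} [Ring A] [Algebra ℂ A]
    (q Q Q11 Q12 Q21 Q22 : ℂ) (hq : q ≠ 0)
    (c1 : Q11 + q * Q12 = q * Q) (c2 : Q11 + q * Q22 = q)
    (c3 : Q12 + q * Q21 = -1) (c4 : q * Q21 + Q22 = -Q)
    (x : Aˣ) (θ dx dθ : A)
    (hxθ : (x : A) * θ = q • (θ * (x : A))) (hθθ : θ * θ = 0)
    (h1 : (x : A) * dx = Q • (dx * (x : A)))
    (h2 : (x : A) * dθ = Q11 • (dθ * (x : A)) + Q12 • (dx * θ))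
    (h3 : θ * dx = Q21 • (dx * θ) + Q22 • (dθ * (x : A)))
    (h4 : θ * dθ = dθ * θ) :
    (x : A) * (dx * (↑x⁻¹ : A)) = Q • ((dx * (↑x⁻¹ : A)) * (x : A)) ∧
    (x : A) * (dθ * (↑x⁻¹ : A) - dx * (↑x⁻¹ : A) * θ * (↑x⁻¹ : A)) =
      Q11 • ((dθ * (↑x⁻¹ : A) - dx * (↑x⁻¹ : A) * θ * (↑x⁻¹ : A)) * (x : A)) ∧
    θ * (dx * (↑x⁻¹ : A)) = (-Q) • ((dx * (↑x⁻¹ : A)) * θ)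
      + Q22 • ((dθ * (↑x⁻¹ : A) - dx * (↑x⁻¹ : A) * θ * (↑x⁻¹ : A)) * (x : A)) ∧
    θ * (dθ * (↑x⁻¹ : A) - dx * (↑x⁻¹ : A) * θ * (↑x⁻¹ : A)) =
      Q11 • ((dθ * (↑x⁻¹ : A) - dx * (↑x⁻¹ : A) * θ * (↑x⁻¹ : A)) * θ) := by
  have hθy : θ * (↑x⁻¹ : A) = q • ((↑x⁻¹ : A) * θ) := by
    have h := congrArg (fun a => (↑x⁻¹ : A) * a * (↑x⁻¹ : A)) hxθ
    simpa [mul_assoc, mul_smul_comm, smul_mul_assoc, Units.inv_mul_cancel_left,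
      Units.mul_inv, Units.inv_mul] using h
  have hθy' : ∀ b : A, θ * ((↑x⁻¹ : A) * b) = q • ((↑x⁻¹ : A) * (θ * b)) := fun b => by
    rw [← mul_assoc, hθy, smul_mul_assoc, mul_assoc]
  have hθθ' : ∀ b : A, θ * (θ * b) = 0 := fun b => by
    rw [← mul_assoc, hθθ, zero_mul]
  have h1' : ∀ b : A, (x : A) * (dx * b) = Q • (dx * ((x : A) * b)) := fun b => by
    rw [← mul_assoc, h1, smul_mul_assoc, mul_assoc]
  have h2' : ∀ b : A, (x : A) * (dθ * b) = Q11 • (dθ * ((x : A) * b)) + Q12 • (dx * (θ * b)) :=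
    fun b => by rw [← mul_assoc, h2, add_mul, smul_mul_assoc, smul_mul_assoc, mul_assoc, mul_assoc]
  have h3' : ∀ b : A, θ * (dx * b) = Q21 • (dx * (θ * b)) + Q22 • (dθ * ((x : A) * b)) :=
    fun b => by rw [← mul_assoc, h3, add_mul, smul_mul_assoc, smul_mul_assoc, mul_assoc, mul_assoc]
  have h4' : ∀ b : A, θ * (dθ * b) = dθ * (θ * b) := fun b => by
    rw [← mul_assoc, h4, mul_assoc]
  refine ⟨?_, ?_, ?_, ?_⟩
  · simp only [mul_sub, sub_mul, mul_assoc, Units.mul_inv_cancel_left,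
      Units.inv_mul_cancel_left, Units.mul_inv, Units.inv_mul, mul_one, one_mul]
    simp only [mul_sub, sub_mul, mul_assoc, h1', h2', h3', h4', hθy', hθθ', hθy, hθθ,
      Units.mul_inv_cancel_left, Units.inv_mul_cancel_left, Units.mul_inv, Units.inv_mul,
      mul_one, one_mul, smul_mul_assoc, mul_smul_comm, smul_smul, smul_zero, mul_zero, smul_sub]
  · simp only [mul_sub, sub_mul, mul_assoc, Units.mul_inv_cancel_left,
      Units.inv_mul_cancel_left, Units.mul_inv, Units.inv_mul, mul_one, one_mul]
    simp only [mul_sub, sub_mul, mul_assoc, h1', h2', h3', h4', hθy', hθθ', hθy, hθθ,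
      Units.mul_inv_cancel_left, Units.inv_mul_cancel_left, Units.mul_inv, Units.inv_mul,
      mul_one, one_mul, smul_mul_assoc, mul_smul_comm, smul_smul, smul_zero, mul_zero, smul_sub]
    match_scalars <;> ring_nf <;> linear_combination c1
  · simp only [mul_sub, sub_mul, mul_assoc, Units.mul_inv_cancel_left,
      Units.inv_mul_cancel_left, Units.mul_inv, Units.inv_mul, mul_one, one_mul]
    simp only [mul_sub, sub_mul, mul_assoc, h1', h2', h3', h4', hθy', hθθ', hθy, hθθ,
      Units.mul_inv_cancel_left, Units.inv_mul_cancel_left, Units.mul_inv, Units.inv_mul,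
      mul_one, one_mul, smul_mul_assoc, mul_smul_comm, smul_smul, smul_zero, mul_zero, smul_sub]
    match_scalars <;> ring_nf <;> linear_combination c4
  · simp only [mul_sub, sub_mul, mul_assoc, Units.mul_inv_cancel_left,
      Units.inv_mul_cancel_left, Units.mul_inv, Units.inv_mul, mul_one, one_mul]
    simp only [mul_sub, sub_mul, mul_assoc, h1', h2', h3', h4', hθy', hθθ', hθy, hθθ,
      Units.mul_inv_cancel_left, Units.inv_mul_cancel_left, Units.mul_inv, Units.inv_mul,
      mul_one, one_mul, smul_mul_assoc, mul_smul_comm, smul_smul, smul_zero, mul_zero, smul_sub]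
    match_scalars <;> linear_combination -c2
end

section
/- Let A be an associative unital ℂ-algebra and q, r ∈ ℂ nonzero. Let x ∈ A be invertible and let θ, dx, dθ ∈ A satisfy the Type II relations: x·θ = q·(θ·x), θ·θ = 0, x·dx = r·(dx·x), x·dθ = q·(dθ·x) + (r−1)·(dx·θ), θ·dx = −(r/q)·(dx·θ), θ·dθ = dθ·θ, dx·dθ = (q/r)·(dθ·dx), and dx·dx = 0. Define ωx = dx·x⁻¹ and ωθ = dθ·x⁻¹ − dx·x⁻¹·θ·x⁻¹. Then ωx·ωθ = ωθ·ωx and ωx·ωx = 0. -/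
theorem cartan_maurer_form_comm {A : Type*} [Ring A] [Algebra ℂ A]
    (q r : ℂ) (hq : q ≠ 0) (hr : r ≠ 0)
    (x : Aˣ) (θ dx dθ : A)
    (hxθ : (x : A) * θ = q • (θ * (x : A))) (hθθ : θ * θ = 0)
    (h1 : (x : A) * dx = r • (dx * (x : A)))
    (h2 : (x : A) * dθ = q • (dθ * (x : A)) + (r - 1) • (dx * θ))
    (h3 : θ * dx = (-(r / q)) • (dx * θ))
    (h4 : θ * dθ = dθ * θ)
    (h5 : dx * dθ = (q / r) • (dθ * dx))
    (h6 : dx * dx = 0) :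
    (dx * (↑x⁻¹ : A)) * (dθ * (↑x⁻¹ : A) - dx * (↑x⁻¹ : A) * θ * (↑x⁻¹ : A)) =
      (dθ * (↑x⁻¹ : A) - dx * (↑x⁻¹ : A) * θ * (↑x⁻¹ : A)) * (dx * (↑x⁻¹ : A)) ∧
    (dx * (↑x⁻¹ : A)) * (dx * (↑x⁻¹ : A)) = 0 := by
  set y : A := (↑x⁻¹ : A) with hy
  have hyx : y * (x : A) = 1 := Units.inv_mul x
  have hxy : (x : A) * y = 1 := Units.mul_inv x
  have c1 : dx * y = r • (y * dx) := by
    calc dx * y = (y * (x : A)) * dx * y := by rw [hyx, one_mul]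
      _ = y * ((x : A) * dx) * y := by rw [mul_assoc y]
      _ = y * (r • (dx * (x : A))) * y := by rw [h1]
      _ = r • (y * (dx * (x : A)) * y) := by rw [mul_smul_comm, smul_mul_assoc]
      _ = r • (y * dx * ((x : A) * y)) := by rw [← mul_assoc y dx, mul_assoc (y * dx)]
      _ = r • (y * dx) := by rw [hxy, mul_one]
  have c2 : θ * y = q • (y * θ) := by
    calc θ * y = (y * (x : A)) * θ * y := by rw [hyx, one_mul]
      _ = y * ((x : A) * θ) * y := by rw [mul_assoc y]
      _ = y * (q • (θ * (x : A))) * y := by rw [hxθ]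
      _ = q • (y * (θ * (x : A)) * y) := by rw [mul_smul_comm, smul_mul_assoc]
      _ = q • (y * θ * ((x : A) * y)) := by rw [← mul_assoc y θ, mul_assoc (y * θ)]
      _ = q • (y * θ) := by rw [hxy, mul_one]
  have yc1 : y * dx = r⁻¹ • (dx * y) := by
    rw [c1, smul_smul, inv_mul_cancel₀ hr, one_smul]
  have yc2 : y * θ = q⁻¹ • (θ * y) := by
    rw [c2, smul_smul, inv_mul_cancel₀ hq, one_smul]
  have s1 : ∀ t : A, y * (dx * t) = r⁻¹ • (dx * (y * t)) := fun t => by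
    rw [← mul_assoc, yc1, smul_mul_assoc, mul_assoc]
  have s2 : ∀ t : A, y * (θ * t) = q⁻¹ • (θ * (y * t)) := fun t => by
    rw [← mul_assoc, yc2, smul_mul_assoc, mul_assoc]
  have c3 : dθ * y = q • (y * dθ) + (r - 1) • (y * (dx * θ) * y) := by
    calc dθ * y = (y * (x : A)) * dθ * y := by rw [hyx, one_mul]
      _ = y * ((x : A) * dθ) * y := by rw [mul_assoc y]
      _ = y * (q • (dθ * (x : A)) + (r - 1) • (dx * θ)) * y := by rw [h2]
      _ = q • (y * (dθ * (x : A)) * y) + (r - 1) • (y * (dx * θ) * y) := by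
          rw [mul_add, add_mul, mul_smul_comm, smul_mul_assoc, mul_smul_comm, smul_mul_assoc]
      _ = q • (y * dθ * ((x : A) * y)) + (r - 1) • (y * (dx * θ) * y) := by
          rw [← mul_assoc y dθ, mul_assoc (y * dθ)]
      _ = q • (y * dθ) + (r - 1) • (y * (dx * θ) * y) := by rw [hxy, mul_one]
  have yc3 : y * dθ = q⁻¹ • (dθ * y) + (-(r - 1) / (q ^ 2 * r)) • (dx * (θ * (y * y))) := by
    have e1 : y * (dx * θ) * y = (r⁻¹ * q⁻¹) • (dx * (θ * (y * y))) := by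
      rw [mul_assoc y (dx * θ) y, mul_assoc dx θ y, s1, s2, mul_smul_comm, smul_smul]
    have e2 : q • (y * dθ) = dθ * y - (r - 1) • (y * (dx * θ) * y) := by
      rw [c3]; abel
    have e3 : y * dθ = q⁻¹ • (dθ * y - (r - 1) • (y * (dx * θ) * y)) := by
      rw [← e2, smul_smul, inv_mul_cancel₀ hq, one_smul]
    rw [e3, e1, smul_sub, smul_smul, smul_smul, sub_eq_add_neg, ← neg_smul]
    congr 1
    field_simp
  have s3 : ∀ t : A, y * (dθ * t) =
      q⁻¹ • (dθ * (y * t)) + (-(r - 1) / (q ^ 2 * r)) • (dx * (θ * (y * (y * t)))) := fun t => by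
    rw [← mul_assoc, yc3, add_mul, smul_mul_assoc, smul_mul_assoc, mul_assoc,
      mul_assoc dx, mul_assoc θ, mul_assoc y]
  have t1 : ∀ t : A, θ * (dx * t) = (-(r / q)) • (dx * (θ * t)) := fun t => by
    rw [← mul_assoc, h3, smul_mul_assoc, mul_assoc]
  have t3 : ∀ t : A, dx * (dθ * t) = (q / r) • (dθ * (dx * t)) := fun t => by
    rw [← mul_assoc, h5, smul_mul_assoc, mul_assoc]
  have t4 : ∀ t : A, dx * (dx * t) = 0 := fun t => by
    rw [← mul_assoc, h6, zero_mul]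
  constructor
  · simp only [mul_sub, sub_mul, mul_assoc]
    simp only [s1, s2, s3, t1, t3, t4, mul_smul_comm, smul_mul_assoc, smul_smul, smul_add,
      smul_sub, mul_zero, zero_mul, smul_zero, mul_add, add_mul, zero_sub, sub_zero, zero_add,
      add_zero, neg_zero]
    match_scalars <;> field_simp
  · rw [mul_assoc dx y, s1, mul_smul_comm, t4, smul_zero]
end

section
/- Let A be an associative unital ℂ-algebra and q, Q, Q₁₁, Q₁₂, Q₂₁, Q₂₂, Q′ ∈ ℂ with q, Q, Q₁₁, Q′ nonzero and Q₁₁ = Q′·(Q + Q₂₂). Let x ∈ A be invertible and let θ, ξ, η, D ∈ A satisfy: D·x = ξ + x·D, D·θ = η − θ·D, D·ξ = −ξ·D, D·η = η·D, x·θ = q·(θ·x), x·ξ = Q·(ξ·x), x·η = Q₁₁·(η·x) + Q₁₂·(ξ·θ), θ·ξ = Q₂₁·(ξ·θ) + Q₂₂·(η·x), ξ·η = Q′·(η·ξ), and ξ·ξ = 0. Define ωθ = η·x⁻¹ − ξ·x⁻¹·θ·x⁻¹. Then D·ωθ − ωθ·D = 0. -/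
theorem d_omega_theta_eq_zero {A : Type*} [Ring A] [Algebra ℂ A]
    (q Q Q11 Q12 Q21 Q22 Q' : ℂ)
    (hq : q ≠ 0) (hQ : Q ≠ 0) (hQ11 : Q11 ≠ 0) (hQ' : Q' ≠ 0)
    (hcond : Q11 = Q' * (Q + Q22))
    (x : Aˣ) (θ ξ η D : A)
    (h1 : D * (x : A) = ξ + (x : A) * D)
    (h2 : D * θ = η - θ * D)
    (h3 : D * ξ = -(ξ * D))
    (h4 : D * η = η * D)
    (h5 : (x : A) * θ = q • (θ * (x : A)))
    (h6 : (x : A) * ξ = Q • (ξ * (x : A)))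
    (h7 : (x : A) * η = Q11 • (η * (x : A)) + Q12 • (ξ * θ))
    (h8 : θ * ξ = Q21 • (ξ * θ) + Q22 • (η * (x : A)))
    (h9 : ξ * η = Q' • (η * ξ))
    (h10 : ξ * ξ = 0) :
    D * (η * (↑x⁻¹ : A) - ξ * (↑x⁻¹ : A) * θ * (↑x⁻¹ : A)) -
      (η * (↑x⁻¹ : A) - ξ * (↑x⁻¹ : A) * θ * (↑x⁻¹ : A)) * D = 0 := by
  set y : A := (↑x⁻¹ : A) with hy
  have hxy : (x : A) * y = 1 := x.mul_inv
  have hyx : y * (x : A) = 1 := x.inv_mul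
  -- D moves past y
  have hDy : D * y = y * D - y * ξ * y := by
    have e : y * (D * (x : A) * y) = y * ((ξ + (x : A) * D) * y) := by rw [h1]
    have lhs : y * (D * (x : A) * y) = y * D := by
      rw [mul_assoc D, hxy, mul_one]
    have rhs : y * ((ξ + (x : A) * D) * y) = y * ξ * y + D * y := by
      rw [add_mul, mul_add, ← mul_assoc, ← mul_assoc, ← mul_assoc, hyx, one_mul]
    rw [lhs, rhs] at e
    rw [e]; abel
  -- y moves past ξ, θ, η
  have hξy : ξ * y = Q • (y * ξ) := by
    have e : y * ((x : A) * ξ) * y = y * (Q • (ξ * (x : A))) * y := by rw [h6]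
    rw [← mul_assoc, hyx, one_mul] at e
    rw [mul_smul_comm, smul_mul_assoc, ← mul_assoc y ξ, mul_assoc (y * ξ), hxy, mul_one] at e
    exact e
  have hyξ : y * ξ = Q⁻¹ • (ξ * y) := by
    rw [hξy, smul_smul, inv_mul_cancel₀ hQ, one_smul]
  have hθy : θ * y = q • (y * θ) := by
    have e : y * ((x : A) * θ) * y = y * (q • (θ * (x : A))) * y := by rw [h5]
    rw [← mul_assoc, hyx, one_mul] at e
    rw [mul_smul_comm, smul_mul_assoc, ← mul_assoc y θ, mul_assoc (y * θ), hxy, mul_one] at e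
    exact e
  have hyθ : y * θ = q⁻¹ • (θ * y) := by
    rw [hθy, smul_smul, inv_mul_cancel₀ hq, one_smul]
  have hηy : η * y = Q11 • (y * η) + Q12 • (y * (ξ * θ) * y) := by
    have e : y * ((x : A) * η) * y = y * (Q11 • (η * (x : A)) + Q12 • (ξ * θ)) * y := by rw [h7]
    rw [← mul_assoc, hyx, one_mul] at e
    rw [mul_add, add_mul, mul_smul_comm, smul_mul_assoc, mul_smul_comm, smul_mul_assoc,
      ← mul_assoc y η, mul_assoc (y * η), hxy, mul_one] at e
    exact e
  have hyη : y * η = Q11⁻¹ • (η * y) - (Q11⁻¹ * Q12) • (y * (ξ * θ) * y) := by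
    have := hηy
    have e : Q11 • (y * η) = η * y - Q12 • (y * (ξ * θ) * y) := by
      rw [this]; abel
    calc y * η = Q11⁻¹ • (Q11 • (y * η)) := by
          rw [smul_smul, inv_mul_cancel₀ hQ11, one_smul]
      _ = Q11⁻¹ • (η * y - Q12 • (y * (ξ * θ) * y)) := by rw [e]
      _ = Q11⁻¹ • (η * y) - (Q11⁻¹ * Q12) • (y * (ξ * θ) * y) := by
          rw [smul_sub, smul_smul]
  -- ξ kills ξ·ξ
  have hξξ : ∀ a : A, ξ * (ξ * a) = 0 := by
    intro a; rw [← mul_assoc, h10, zero_mul]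
  -- consistency relation from x·θ·ξ computed two ways
  have a1 : (x : A) * (ξ * θ) = (Q * q) • (ξ * (θ * (x : A))) := by
    rw [← mul_assoc, h6, smul_mul_assoc, mul_assoc, h5, mul_smul_comm, smul_smul]
  have a2 : (x : A) * (η * (x : A)) =
      Q11 • (η * ((x : A) * (x : A))) + Q12 • (ξ * (θ * (x : A))) := by
    rw [← mul_assoc, h7, add_mul, smul_mul_assoc, smul_mul_assoc, mul_assoc, mul_assoc]
  have hcons : (Q22 * Q12) • (ξ * (θ * (x : A))) =
      (q * Q * Q22 - Q22 * Q11) • (η * ((x : A) * (x : A))) := by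
    have w1 : (x : A) * (θ * ξ) =
        (Q21 * (Q * q) + Q22 * Q12) • (ξ * (θ * (x : A))) +
          (Q22 * Q11) • (η * ((x : A) * (x : A))) := by
      rw [h8, mul_add, mul_smul_comm, mul_smul_comm, a1, a2]
      rw [smul_smul, smul_add, smul_smul, smul_smul]
      module
    have w2 : (x : A) * (θ * ξ) =
        (q * Q * Q21) • (ξ * (θ * (x : A))) +
          (q * Q * Q22) • (η * ((x : A) * (x : A))) := by
      have b1 : (x : A) * (θ * ξ) = (q * Q) • (θ * ξ * (x : A)) := by
        rw [← mul_assoc, h5, smul_mul_assoc, mul_assoc, h6, mul_smul_comm, smul_smul,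
          ← mul_assoc]
      have b2 : θ * ξ * (x : A) =
          Q21 • (ξ * (θ * (x : A))) + Q22 • (η * ((x : A) * (x : A))) := by
        rw [h8, add_mul, smul_mul_assoc, smul_mul_assoc, mul_assoc, mul_assoc]
      rw [b1, b2, smul_add, smul_smul, smul_smul]
    have e := w1.symm.trans w2
    linear_combination (norm := module) e
  -- hence the key vanishing identity
  have hkey : (q * Q * Q22 - Q22 * Q11) • (ξ * (η * (y * y))) = 0 := by
    have e := congrArg (fun a => ξ * a * (y * (y * (y * y)))) hcons
    simp only [mul_smul_comm, smul_mul_assoc] at e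
    rw [hξξ, zero_mul, smul_zero] at e
    have assoc : ξ * (η * ((x:A) * (x:A))) * (y * (y * (y * y))) = ξ * (η * (y * y)) := by
      have : (x:A) * ((x:A) * (y * (y * (y * y)))) = y * y := by
        rw [← mul_assoc ((x:A)) y, hxy, one_mul, ← mul_assoc ((x:A)) y, hxy, one_mul]
      calc ξ * (η * ((x:A) * (x:A))) * (y * (y * (y * y)))
          = ξ * (η * ((x:A) * ((x:A) * (y * (y * (y * y)))))) := by noncomm_ring
        _ = ξ * (η * (y * y)) := by rw [this]
    rw [assoc] at e
    exact e.symm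
  -- η·ξ in terms of ξ·η
  have hηξ : η * ξ = Q'⁻¹ • (ξ * η) := by
    rw [h9, smul_smul, inv_mul_cancel₀ hQ', one_smul]
  -- the four monomials
  have s1 : y * (ξ * y) = Q⁻¹ • (ξ * (y * y)) := by
    rw [← mul_assoc, hyξ, smul_mul_assoc, mul_assoc]
  have s1' : y * (ξ * (y * y)) = Q⁻¹ • (ξ * (y * (y * y))) := by
    rw [← mul_assoc, hyξ, smul_mul_assoc, mul_assoc]
  have T1 : η * (y * (ξ * y)) = (Q'⁻¹ * Q⁻¹) • (ξ * (η * (y * y))) := by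
    rw [s1, mul_smul_comm, ← mul_assoc η ξ, hηξ, smul_mul_assoc, smul_smul, mul_assoc]
    module
  have T2 : ξ * (y * (η * y)) = Q11⁻¹ • (ξ * (η * (y * y))) := by
    have e2 : y * (η * y) = Q11⁻¹ • (η * (y * y)) -
        (Q11⁻¹ * Q12) • (y * (ξ * θ) * y * y) := by
      rw [← mul_assoc, hyη, sub_mul, smul_mul_assoc, smul_mul_assoc, mul_assoc η]
    rw [e2, mul_sub, mul_smul_comm, mul_smul_comm]
    have z : ξ * (y * (ξ * θ) * y * y) = 0 := by
      rw [show y * (ξ * θ) * y * y = y * ξ * (θ * (y * y)) by noncomm_ring, hyξ,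
        smul_mul_assoc, mul_smul_comm]
      rw [show ξ * (ξ * y * (θ * (y * y))) = ξ * (ξ * (y * (θ * (y * y)))) by noncomm_ring]
      rw [hξξ, smul_zero]
    rw [z, smul_zero, sub_zero]
  have T3 : ξ * (y * (θ * (y * (ξ * y)))) =
      (q⁻¹ * (Q⁻¹ * Q⁻¹) * Q22) • (ξ * (η * (y * y))) := by
    rw [s1]
    simp only [mul_smul_comm, smul_smul]
    rw [← mul_assoc y θ, hyθ, smul_mul_assoc]
    simp only [mul_smul_comm, smul_smul]
    rw [mul_assoc θ y, s1']
    simp only [mul_smul_comm, smul_smul]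
    rw [← mul_assoc θ ξ, h8, add_mul, smul_mul_assoc, smul_mul_assoc]
    simp only [mul_add, mul_smul_comm, smul_add, smul_smul]
    rw [show ξ * (ξ * θ * (y * (y * y))) = ξ * (ξ * (θ * (y * (y * y)))) by noncomm_ring]
    rw [hξξ, smul_zero, zero_add]
    rw [mul_assoc η (x : A), show (x : A) * (y * (y * y)) = y * y by
      rw [← mul_assoc, hxy, one_mul]]
    match_scalars
    ring
  have T4 : ξ * (y * (ξ * (y * (θ * y)))) = 0 := by
    rw [← mul_assoc y ξ, hyξ, smul_mul_assoc, mul_smul_comm]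
    rw [show ξ * (ξ * y * (y * (θ * y))) = ξ * (ξ * (y * (y * (θ * y)))) by noncomm_ring]
    rw [hξξ, smul_zero]
  -- expand the derivative
  have eA : D * (η * y) = η * (y * D) - η * (y * ξ * y) := by
    rw [← mul_assoc, h4, mul_assoc, hDy, mul_sub, mul_assoc]
  have eθy : D * (θ * y) = η * y - θ * (y * D) + θ * (y * ξ * y) := by
    rw [← mul_assoc, h2, sub_mul, mul_assoc, hDy, mul_sub, mul_assoc]
    noncomm_ring
  have eB : D * (ξ * y * θ * y) =
      -(ξ * (y * (η * y))) + ξ * (y * (θ * (y * D))) - ξ * (y * (θ * (y * ξ * y)))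
        + ξ * (y * ξ * y * (θ * y)) := by
    have step : D * (ξ * (y * (θ * y))) =
        -(ξ * ((y * D - y * ξ * y) * (θ * y))) := by
      rw [← mul_assoc, h3, neg_mul, mul_assoc, ← hDy]
      rw [mul_assoc D y, ← mul_assoc D, hDy]
    have expand : ξ * ((y * D - y * ξ * y) * (θ * y)) =
        ξ * (y * (D * (θ * y))) - ξ * (y * ξ * y * (θ * y)) := by
      noncomm_ring
    rw [show ξ * y * θ * y = ξ * (y * (θ * y)) by noncomm_ring, step, expand, eθy]
    noncomm_ring
  rw [mul_sub, sub_mul, eA, eB]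
  have reduce :
      η * (y * D) - η * (y * ξ * y) -
        (-(ξ * (y * (η * y))) + ξ * (y * (θ * (y * D))) - ξ * (y * (θ * (y * ξ * y)))
          + ξ * (y * ξ * y * (θ * y))) -
        (η * y * D - ξ * y * θ * y * D) =
      ξ * (y * (η * y)) - η * (y * (ξ * y)) + ξ * (y * (θ * (y * (ξ * y))))
        - ξ * (y * (ξ * (y * (θ * y)))) := by
    noncomm_ring
  rw [reduce, T1, T2, T3, T4, sub_zero]
  have coeff : Q11⁻¹ - Q'⁻¹ * Q⁻¹ + q⁻¹ * (Q⁻¹ * Q⁻¹) * Q22 =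
      (-(q * Q * Q * Q11)⁻¹) * (q * Q * Q22 - Q22 * Q11) := by
    field_simp
    ring_nf
    rw [hcond]
    ring
  have comb : Q11⁻¹ • (ξ * (η * (y * y))) - (Q'⁻¹ * Q⁻¹) • (ξ * (η * (y * y))) +
      (q⁻¹ * (Q⁻¹ * Q⁻¹) * Q22) • (ξ * (η * (y * y))) =
      (Q11⁻¹ - Q'⁻¹ * Q⁻¹ + q⁻¹ * (Q⁻¹ * Q⁻¹) * Q22) • (ξ * (η * (y * y))) := by
    module
  rw [comb, coeff, ← smul_smul, hkey, smul_zero]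
end

section
/- Let A be an associative unital ℂ-algebra and Q, Q₁₂ ∈ ℂ with Q nonzero. Let x, θ, ξ, η, iₓ, i_θ, D ∈ A satisfy: D·x = ξ + x·D, D·θ = η − θ·D, iₓ·x = Q·(x·iₓ) + Q₁₂·(θ·i_θ), and iₓ·ξ = 1 − ξ·iₓ − Q⁻¹·Q₁₂·(η·i_θ). Define Lₓ = iₓ·D + D·iₓ and L_θ = i_θ·D − D·i_θ. Then Lₓ·x = 1 + Q·(x·Lₓ) + Q₁₂·(θ·L_θ) + (Q−1)·(ξ·iₓ + Q⁻¹·Q₁₂·(η·i_θ)). -/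
theorem lie_deriv_x_coordinate_comm {A : Type*} [Ring A] [Algebra ℂ A]
    (Q Q12 : ℂ) (hQ : Q ≠ 0)
    (x θ ξ η ix iθ D : A)
    (h1 : D * x = ξ + x * D)
    (h2 : D * θ = η - θ * D)
    (h3 : ix * x = Q • (x * ix) + Q12 • (θ * iθ))
    (h4 : ix * ξ = 1 - ξ * ix - (Q⁻¹ * Q12) • (η * iθ)) :
    (ix * D + D * ix) * x =
      1 + Q • (x * (ix * D + D * ix)) + Q12 • (θ * (iθ * D - D * iθ))
        + (Q - 1) • (ξ * ix + (Q⁻¹ * Q12) • (η * iθ)) := by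
  have e1 : (ix * D + D * ix) * x = ix * (D * x) + D * (ix * x) := by noncomm_ring
  have A1 : ix * (D * x)
      = (1 - ξ * ix - (Q⁻¹ * Q12) • (η * iθ)) + (Q • (x * ix) + Q12 • (θ * iθ)) * D := by
    rw [h1, mul_add, ← mul_assoc, h4, h3]
  have A2 : D * (ix * x) = Q • ((ξ + x * D) * ix) + Q12 • ((η - θ * D) * iθ) := by
    rw [h3, mul_add, mul_smul_comm, mul_smul_comm, ← mul_assoc, ← mul_assoc, h1, h2]
  rw [e1, A1, A2]
  simp only [mul_add, add_mul, sub_mul, mul_sub, smul_add, smul_sub, mul_assoc,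
    smul_mul_assoc, mul_smul_comm]
  match_scalars <;> field_simp <;> ring
end

section
/- Let A be an associative unital ℂ-algebra and Q, Q₁₁ ∈ ℂ with Q nonzero. Let x, ξ, i_θ, D ∈ A satisfy: D·x = ξ + x·D, i_θ·x = Q₁₁·(x·i_θ), and i_θ·ξ = Q⁻¹·Q₁₁·(ξ·i_θ). Define L_θ = i_θ·D − D·i_θ. Then L_θ·x = Q₁₁·(x·L_θ) + Q₁₁·(Q⁻¹ − 1)·(ξ·i_θ). -/
theorem lie_deriv_theta_coordinate_comm {A : Type*} [Ring A] [Algebra ℂ A]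
    (Q Q11 : ℂ) (hQ : Q ≠ 0)
    (x ξ iθ D : A)
    (h1 : D * x = ξ + x * D)
    (h2 : iθ * x = Q11 • (x * iθ))
    (h3 : iθ * ξ = (Q⁻¹ * Q11) • (ξ * iθ)) :
    (iθ * D - D * iθ) * x =
      Q11 • (x * (iθ * D - D * iθ)) + (Q11 * (Q⁻¹ - 1)) • (ξ * iθ) := by
  have : iθ * (D * x) - D * (iθ * x) =
      Q11 • (x * (iθ * D - D * iθ)) + (Q11 * (Q⁻¹ - 1)) • (ξ * iθ) := by
    rw [h1, h2, mul_add, h3, ← mul_assoc, h2, smul_mul_assoc, mul_smul_comm,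
      ← mul_assoc, h1, add_mul]
    simp only [smul_sub, smul_add, mul_sub, mul_add, smul_smul, mul_assoc]
    module
  rw [sub_mul, mul_assoc, mul_assoc, this]
end

section
/- Let A be an associative unital ℂ-algebra and Q, Q₁₂, Q₂₁ ∈ ℂ with Q nonzero. Let ξ, η, θ, iₓ, i_θ, D ∈ A satisfy: D·ξ = −ξ·D, D·η = η·D, iₓ·ξ = 1 − ξ·iₓ − Q⁻¹·Q₁₂·(η·i_θ), iₓ·η = −Q⁻¹·Q₂₁·(η·iₓ), and iₓ·θ = Q₂₁·(θ·iₓ). Define Lₓ = iₓ·D + D·iₓ and L_θ = i_θ·D − D·i_θ. Then Lₓ·ξ = ξ·Lₓ + Q⁻¹·Q₁₂·(η·L_θ) and Lₓ·η = −Q⁻¹·Q₂₁·(η·Lₓ). -/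
theorem lie_deriv_x_differential_comm {A : Type*} [Ring A] [Algebra ℂ A]
    (Q Q12 Q21 : ℂ) (hQ : Q ≠ 0)
    (ξ η θ ix iθ D : A)
    (h1 : D * ξ = -(ξ * D))
    (h2 : D * η = η * D)
    (h3 : ix * ξ = 1 - ξ * ix - (Q⁻¹ * Q12) • (η * iθ))
    (h4 : ix * η = (-(Q⁻¹ * Q21)) • (η * ix))
    (h5 : ix * θ = Q21 • (θ * ix)) :
    (ix * D + D * ix) * ξ =
      ξ * (ix * D + D * ix) + (Q⁻¹ * Q12) • (η * (iθ * D - D * iθ)) ∧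
    (ix * D + D * ix) * η = (-(Q⁻¹ * Q21)) • (η * (ix * D + D * ix)) := by
  have h1' : ∀ x : A, D * (ξ * x) = -(ξ * (D * x)) := fun x => by
    rw [← mul_assoc, h1, neg_mul, mul_assoc]
  have h2' : ∀ x : A, D * (η * x) = η * (D * x) := fun x => by
    rw [← mul_assoc, h2, mul_assoc]
  have h3' : ∀ x : A, ix * (ξ * x) = x - ξ * (ix * x) - (Q⁻¹ * Q12) • (η * (iθ * x)) :=
    fun x => by
      rw [← mul_assoc, h3, sub_mul, sub_mul, one_mul, mul_assoc, smul_mul_assoc, mul_assoc]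
  have h4' : ∀ x : A, ix * (η * x) = (-(Q⁻¹ * Q21)) • (η * (ix * x)) := fun x => by
    rw [← mul_assoc, h4, smul_mul_assoc, mul_assoc]
  constructor
  · rw [add_mul, mul_assoc, mul_assoc, h1, h3, mul_neg, h3' D,
      mul_sub, mul_sub, mul_one, mul_smul_comm, h1' ix, h2' iθ]
    simp only [mul_add, mul_sub, smul_sub, smul_add]
    module
  · rw [add_mul, mul_assoc, mul_assoc, h2, h4, h4' D, mul_smul_comm, h2' ix]
    simp only [mul_add, smul_add]
end
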